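/- Let 0 < δ < 1 and let L be an integer with L > δ⁻¹. Let X ⊆ {r+1, r+2, ..., r+L} be a set of integers with |X| ≥ δL. Then for any positive integer k with δ⁻ᵏ < L there exist x₁, x₂ ∈ X with δ^{-(k-1)}/2 ≤ x₁ - x₂ < 2δ⁻ᵏ. -/

import Mathlib

set_option maxHeartbeats 1000000

open Finset

private lemma gap_lemma {n : ℕ} (f : Fin n → ℤ) (hf : StrictMono f) :
    ∀ (d : ℕ) (i j : Fin n), (j : ℕ) = (i : ℕ) + d → (d : ℤ) ≤ f j - f i := by
  intro d
  induction d with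
  | zero =>
    intro i j hij
    have : i = j := Fin.ext (by omega)
    simp [this]
  | succ d ih =>
    intro i j hij
    have hlt : (i : ℕ) + d < n := by omega
    have h1 := ih i ⟨(i : ℕ) + d, hlt⟩ rfl
    have h2 : f ⟨(i : ℕ) + d, hlt⟩ < f j := hf (by simp only [Fin.lt_def]; omega)
    push_cast
    omega

theorem close_pair_in_dense_set
    (δ : ℚ) (hδ0 : 0 < δ) (hδ1 : δ < 1)
    (r L : ℤ) (hL : δ⁻¹ < (L : ℚ))
    (X : Finset ℤ) (hX : X ⊆ Finset.Icc (r + 1) (r + L))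
    (hcard : δ * (L : ℚ) ≤ (X.card : ℚ))
    (k : ℕ) (hk : 1 ≤ k) (hkL : δ⁻¹ ^ k < (L : ℚ)) :
    ∃ x₁ ∈ X, ∃ x₂ ∈ X,
      δ⁻¹ ^ (k - 1) / 2 ≤ ((x₁ - x₂ : ℤ) : ℚ) ∧
      ((x₁ - x₂ : ℤ) : ℚ) < 2 * δ⁻¹ ^ k := by
  by_contra hcon
  push_neg at hcon
  -- basic facts about δ⁻¹
  have hδinv : (1 : ℚ) < δ⁻¹ := by
    rw [show (1:ℚ) = 1⁻¹ by norm_num]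
    exact inv_strictAnti₀ hδ0 hδ1
  have hP1 : (1 : ℚ) ≤ δ⁻¹ ^ (k - 1) := one_le_pow₀ (le_of_lt hδinv)
  have hP0 : (0 : ℚ) < δ⁻¹ ^ (k - 1) := lt_of_lt_of_le one_pos hP1
  have hkk : k = (k - 1) + 1 := (Nat.succ_pred_eq_of_pos hk).symm
  have hdP : δ * δ⁻¹ ^ k = δ⁻¹ ^ (k - 1) := by
    rw [hkk, pow_succ]
    field_simp
    simp
  set A : ℚ := δ⁻¹ ^ (k - 1) / 2 with hA
  set B : ℚ := 2 * δ⁻¹ ^ k with hB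
  have hB0 : (0 : ℚ) < B := by
    have : (0:ℚ) < δ⁻¹ ^ k := pow_pos (lt_trans one_pos hδinv) _
    positivity
  have hdB : δ * B = 2 * δ⁻¹ ^ (k - 1) := by
    rw [hB, mul_left_comm, hdP]
  -- n
  set n : ℕ := X.card with hn
  have hL0 : (0 : ℚ) < (L : ℚ) := lt_trans (lt_trans one_pos hδinv) hL
  have hnδL : δ * (L : ℚ) ≤ (n : ℚ) := hcard
  have hδLP : δ⁻¹ ^ (k - 1) < δ * (L : ℚ) := by
    calc δ⁻¹ ^ (k - 1) = δ * δ⁻¹ ^ k := hdP.symm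
    _ < δ * L := by exact mul_lt_mul_of_pos_left hkL hδ0
  -- s
  set s : ℕ := (⌈A⌉).toNat with hs
  have hA0 : (0 : ℚ) < A := by positivity
  have hsceil : (s : ℤ) = ⌈A⌉ := Int.toNat_of_nonneg (by positivity)
  have hAs : A ≤ (s : ℚ) := by
    have := Int.le_ceil A
    rw [← hsceil] at this
    exact_mod_cast this
  have hs1 : 1 ≤ s := by
    by_contra h
    interval_cases s
    simp at hAs
    linarith
  have hs2A : (s : ℚ) ≤ δ⁻¹ ^ (k - 1) := by
    rcases le_or_gt A 1 with h | h
    · have h1 : ⌈A⌉ ≤ 1 := by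
        calc ⌈A⌉ ≤ ⌈(1:ℚ)⌉ := Int.ceil_le_ceil h
          _ = 1 := by simp
      have h2 : s = 1 := by omega
      rw [h2]
      simpa using hP1
    · have h3 : ((s:ℤ) : ℚ) < A + 1 := by
        rw [hsceil]; exact Int.ceil_lt_add_one A
      have h4 : (s : ℚ) < A + 1 := by exact_mod_cast h3
      have h5 : A + 1 ≤ 2 * A := by linarith
      have h6 : (2:ℚ) * A = δ⁻¹ ^ (k - 1) := by rw [hA]; ring
      linarith
  have hsn : s < n := by
    have h1 : (s : ℚ) < (n : ℚ) := lt_of_le_of_lt hs2A (lt_of_lt_of_le hδLP hnδL)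
    exact_mod_cast h1
  have hn0 : 0 < n := lt_trans (Nat.lt_of_lt_of_le (Nat.zero_lt_one) hs1) hsn
  -- the order embedding
  set f := X.orderEmbOfFin (rfl : X.card = n) with hf
  have hfmem : ∀ i : Fin n, f i ∈ X := fun i => X.orderEmbOfFin_mem rfl i
  have hfmono : StrictMono f := OrderEmbedding.strictMono f
  have hbound : ∀ i j : Fin n, ((f j - f i : ℤ) : ℚ) ≤ (L : ℚ) - 1 := by
    intro i j
    have h1 := Finset.mem_Icc.mp (hX (hfmem j))
    have h2 := Finset.mem_Icc.mp (hX (hfmem i))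
    have : f j - f i ≤ L - 1 := by omega
    exact_mod_cast this
  -- key: any pair at index distance s has difference ≥ s ≥ A
  have hgapA : ∀ i j : Fin n, (j : ℕ) = (i : ℕ) + s → A ≤ ((f j - f i : ℤ) : ℚ) := by
    intro i j hij
    have := gap_lemma f hfmono s i j hij
    calc A ≤ (s : ℚ) := hAs
    _ ≤ ((f j - f i : ℤ) : ℚ) := by exact_mod_cast this
  rcases le_or_gt (L : ℚ) B with hLB | hBL
  · -- Case 1 : L ≤ B ; use extremes
    have hlast : n - 1 < n := by omega
    have h0 : (0 : ℕ) < n := hn0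
    have hdist : ((n - 1 : ℕ) : ℕ) = (0 : ℕ) + (n - 1) := by omega
    have hge := gap_lemma f hfmono (n - 1) ⟨0, h0⟩ ⟨n - 1, hlast⟩ (by simp)
    have hAle : A ≤ ((f ⟨n-1, hlast⟩ - f ⟨0, h0⟩ : ℤ) : ℚ) := by
      have hs' : (s : ℚ) ≤ ((n - 1 : ℕ) : ℚ) := by
        have : s ≤ n - 1 := by omega
        exact_mod_cast this
      calc A ≤ (s : ℚ) := hAs
      _ ≤ ((n - 1 : ℕ) : ℚ) := hs'
      _ ≤ ((f ⟨n-1, hlast⟩ - f ⟨0, h0⟩ : ℤ) : ℚ) := by exact_mod_cast hge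
    have hBle := hcon _ (hfmem _) _ (hfmem _) hAle
    have := hbound ⟨0, h0⟩ ⟨n-1, hlast⟩
    linarith
  · -- Case 2 : B < L ; pigeonhole along stride s
    have H : ∀ (i : ℕ) (hi : i + s < n),
        B ≤ ((f ⟨i + s, hi⟩ - f ⟨i, by omega⟩ : ℤ) : ℚ) := by
      intro i hi
      exact hcon _ (hfmem _) _ (hfmem _) (hgapA ⟨i, by omega⟩ ⟨i + s, hi⟩ rfl)
    have chain : ∀ (q : ℕ) (hq : q * s ≤ n - 1),
        (q : ℚ) * B ≤ ((f ⟨q * s, by omega⟩ - f ⟨0, hn0⟩ : ℤ) : ℚ) := by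
      intro q
      induction q with
      | zero => intro hq; simp
      | succ q ih =>
        intro hq
        have hqs : q * s ≤ n - 1 := by
          have : q * s ≤ (q+1) * s := Nat.mul_le_mul_right _ (by omega)
          omega
        have hstep : q * s + s < n := by
          have : (q+1) * s = q * s + s := by ring
          omega
        have h1 := ih hqs
        have h2 := H (q * s) hstep
        have heq : f ⟨(q+1) * s, by omega⟩ = f ⟨q * s + s, hstep⟩ := by
          congr 1
          apply Fin.ext
          simp [Nat.succ_mul]
        rw [heq]
        push_cast at h1 h2 ⊢
        linarith
    set q : ℕ := (n - 1) / s with hq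
    have hq1 : q * s ≤ n - 1 := Nat.div_mul_le_self _ _
    have hq2 : n ≤ q * s + s := by
      have h := Nat.div_add_mod (n - 1) s
      have hmod : (n - 1) % s < s := Nat.mod_lt _ (by omega)
      have hqq : q * s = s * ((n - 1) / s) := by rw [hq, Nat.mul_comm]
      omega
    have hchain := chain q hq1
    have hub := hbound ⟨0, hn0⟩ ⟨q * s, by omega⟩
    have hqB : (q : ℚ) * B ≤ (L : ℚ) - 1 := le_trans hchain hub
    -- numeric contradiction
    have hqsn : (n : ℚ) - (s : ℚ) ≤ (q : ℚ) * (s : ℚ) := by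
      have : (n : ℚ) ≤ (q : ℚ) * s + s := by exact_mod_cast hq2
      linarith
    have hs0 : (0 : ℚ) < (s : ℚ) := by exact_mod_cast hs1
    have key : (δ * L - s) * B ≤ (s : ℚ) * ((L : ℚ) - 1) := by
      have h1 : δ * L - (s:ℚ) ≤ (q : ℚ) * s := le_trans (by linarith) hqsn
      nlinarith [hqB, hB0]
    -- δ L B ≤ s L - s + s B < s L + s L = 2 s L ≤ δ B L, contradiction
    have hfin : δ * L * B < δ * B * L := by
      have h2 : (s : ℚ) * B < (s : ℚ) * L := by nlinarith
      have h3 : 2 * (s:ℚ) * L ≤ δ * B * L := by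
        have : 2 * (s : ℚ) ≤ δ * B := by rw [hdB]; linarith
        nlinarith
      nlinarith
    linarith [hfin]
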